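/- Assume each column Xⱼ of X ∈ ℝ^{n×p} satisfies ‖Xⱼ‖₂² = n, and let ε ∈ ℝⁿ be a random vector with independent N(0, σ²) coordinates, σ > 0. Then for every L > 0, Pr[ ‖Xᵀε‖_∞/(nσ) > √((2·log p + 2L)/n) ] ≤ e^{−L}. -/

import Mathlib

open MeasureTheory ProbabilityTheory Matrix
open scoped ENNReal

noncomputable section

/-- squared Euclidean norm on ℝⁿ -/
def l2sq {n : ℕ} (v : Fin n → ℝ) : ℝ := ∑ i, (v i) ^ 2

/-- ℓ₁ norm on ℝᵖ -/
def l1 {p : ℕ} (b : Fin p → ℝ) : ℝ := ∑ j, |b j|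

/-- sup norm on ℝᵖ -/
def linf {p : ℕ} (v : Fin p → ℝ) : ℝ := ⨆ j, |v j|

section Aux

open Real Set
open scoped NNReal

/-- Pointwise convolution identity for Gaussian densities (completing the square). -/
lemma aux_pdf_conv (a b : ℝ≥0) (ha : a ≠ 0) (hb : b ≠ 0) (z x : ℝ) :
    gaussianPDFReal 0 a x * gaussianPDFReal x b z
      = gaussianPDFReal 0 (a + b) z
        * gaussianPDFReal ((a : ℝ) * z / ((a : ℝ) + b)) (a * b / (a + b)) x := by
  have ha' : (0:ℝ) < a := lt_of_le_of_ne a.coe_nonneg (by exact_mod_cast (Ne.symm ha))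
  have hb' : (0:ℝ) < b := lt_of_le_of_ne b.coe_nonneg (by exact_mod_cast (Ne.symm hb))
  have hab : (0:ℝ) < (a:ℝ) + b := by linarith
  have hc : ((a * b / (a + b) : ℝ≥0) : ℝ) = (a:ℝ) * b / ((a:ℝ) + b) := by push_cast; ring
  simp only [gaussianPDFReal, hc, NNReal.coe_add]
  rw [mul_mul_mul_comm, ← Real.exp_add, mul_mul_mul_comm, ← Real.exp_add]
  congr 1
  · rw [← mul_inv, ← mul_inv, ← Real.sqrt_mul (by positivity), ← Real.sqrt_mul (by positivity)]
    congr 1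
    field_simp
  · rw [Real.exp_eq_exp]
    field_simp
    ring

lemma aux_lint_mix (a b : ℝ≥0) (ha : a ≠ 0) (hb : b ≠ 0) (z : ℝ) :
    ∫⁻ x, gaussianPDF 0 a x * gaussianPDF x b z = gaussianPDF 0 (a + b) z := by
  have hcne : a * b / (a + b) ≠ 0 := by
    refine div_ne_zero (mul_ne_zero ha hb) ?_
    simp [ha, hb]
  calc ∫⁻ x, gaussianPDF 0 a x * gaussianPDF x b z
      = ∫⁻ x, gaussianPDF 0 (a+b) z
          * gaussianPDF ((a:ℝ) * z / ((a:ℝ) + b)) (a * b / (a + b)) x := by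
        congr 1; ext x
        simp only [gaussianPDF]
        rw [← ENNReal.ofReal_mul (gaussianPDFReal_nonneg _ _ _),
          ← ENNReal.ofReal_mul (gaussianPDFReal_nonneg _ _ _), aux_pdf_conv a b ha hb z x]
    _ = gaussianPDF 0 (a+b) z * ∫⁻ x, gaussianPDF ((a:ℝ) * z / ((a:ℝ) + b)) (a * b / (a + b)) x :=
        lintegral_const_mul _ (measurable_gaussianPDF _ _)
    _ = gaussianPDF 0 (a+b) z := by rw [lintegral_gaussianPDF_eq_one _ hcne, mul_one]

lemma aux_meas_pdf2 (b : ℝ≥0) : Measurable (fun q : ℝ × ℝ => gaussianPDF q.1 b q.2) := by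
  unfold gaussianPDF gaussianPDFReal
  fun_prop

/-- The convolution of two centered Gaussian measures is a centered Gaussian measure. -/
lemma aux_gauss_conv (a b : ℝ≥0) :
    ((gaussianReal 0 a).prod (gaussianReal 0 b)).map (fun q : ℝ × ℝ => q.1 + q.2)
      = gaussianReal 0 (a + b) := by
  by_cases ha : a = 0
  · subst ha
    rw [gaussianReal_zero_var, Measure.dirac_prod, Measure.map_map (by fun_prop) (by fun_prop)]
    simp only [Function.comp_def, zero_add]
    simp [Measure.map_id]
  by_cases hb : b = 0
  · subst hb
    rw [gaussianReal_zero_var, Measure.prod_dirac, Measure.map_map (by fun_prop) (by fun_prop)]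
    simp only [Function.comp_def, add_zero]
    simp [Measure.map_id]
  ext s hs
  rw [Measure.map_apply (by fun_prop) hs,
    Measure.prod_apply (hs.preimage (by fun_prop))]
  have h1 : ∀ x : ℝ, (gaussianReal 0 b) (Prod.mk x ⁻¹' ((fun q : ℝ × ℝ => q.1 + q.2) ⁻¹' s))
      = ∫⁻ z in s, gaussianPDF x b z := by
    intro x
    have : (Prod.mk x ⁻¹' ((fun q : ℝ × ℝ => q.1 + q.2) ⁻¹' s)) = (fun z => x + z) ⁻¹' s := rfl
    rw [this, ← Measure.map_apply (measurable_const_add x) hs, gaussianReal_map_const_add,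
      zero_add, gaussianReal_apply _ hb]
  simp_rw [h1]
  rw [gaussianReal_of_var_ne_zero _ ha,
    lintegral_withDensity_eq_lintegral_mul _ (measurable_gaussianPDF _ _)
      ((aux_meas_pdf2 b).lintegral_prod_right')]
  simp only [Pi.mul_apply]
  calc ∫⁻ x, gaussianPDF 0 a x * ∫⁻ z in s, gaussianPDF x b z
      = ∫⁻ x, ∫⁻ z in s, gaussianPDF 0 a x * gaussianPDF x b z := by
        congr 1; ext x
        rw [lintegral_const_mul _ (measurable_gaussianPDF _ _)]
    _ = ∫⁻ z in s, ∫⁻ x, gaussianPDF 0 a x * gaussianPDF x b z := by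
        rw [lintegral_lintegral_swap]
        exact (((measurable_gaussianPDF 0 a).comp measurable_fst).mul (aux_meas_pdf2 b)).aemeasurable
    _ = ∫⁻ z in s, gaussianPDF 0 (a+b) z := by
        congr 1; ext z
        exact aux_lint_mix a b ha hb z
    _ = gaussianReal 0 (a+b) s := (gaussianReal_apply _ (by simp [ha, hb]) s).symm

variable {Ω : Type} [MeasureSpace Ω] [IsProbabilityMeasure (ℙ : Measure Ω)]

/-- The sum of two independent centered Gaussian random variables is Gaussian. -/
lemma aux_map_add_gauss {U V : Ω → ℝ} (hU : Measurable U) (hV : Measurable V)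
    (hI : IndepFun U V ℙ) {a b : ℝ≥0}
    (ha : Measure.map U ℙ = gaussianReal 0 a) (hb : Measure.map V ℙ = gaussianReal 0 b) :
    Measure.map (U + V) ℙ = gaussianReal 0 (a + b) := by
  have hpair : Measure.map (fun ω => (U ω, V ω)) ℙ = (Measure.map U ℙ).prod (Measure.map V ℙ) :=
    (indepFun_iff_map_prod_eq_prod_map_map hU.aemeasurable hV.aemeasurable).1 hI
  have heq : (U + V) = (fun q : ℝ × ℝ => q.1 + q.2) ∘ (fun ω => (U ω, V ω)) := rfl
  rw [heq, ← Measure.map_map (by fun_prop) (hU.prodMk hV), hpair, ha, hb, aux_gauss_conv]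

/-- A finite sum of independent centered Gaussian random variables is Gaussian. -/
lemma aux_map_sum_gauss {ι : Type} [Fintype ι] (Y : ι → Ω → ℝ) (hm : ∀ i, Measurable (Y i))
    (hind : iIndepFun Y ℙ) (w : ι → ℝ≥0)
    (h : ∀ i, Measure.map (Y i) ℙ = gaussianReal 0 (w i)) (s : Finset ι) :
    Measure.map (∑ i ∈ s, Y i) ℙ = gaussianReal 0 (∑ i ∈ s, w i) := by
  classical
  induction s using Finset.induction_on with
  | empty =>
      simp only [Finset.sum_empty]
      have : ((0 : Ω → ℝ)) = (fun _ => (0:ℝ)) := rfl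
      rw [this, Measure.map_const]
      simp
  | insert k t hns ih =>
      rw [Finset.sum_insert hns, Finset.sum_insert hns]
      have hIk : IndepFun (∑ i ∈ t, Y i) (Y k) ℙ :=
        hind.indepFun_finsetSum_of_notMem hm hns
      have hms : Measurable (∑ i ∈ t, Y i) := by
        have : (∑ i ∈ t, Y i) = fun a => ∑ i ∈ t, Y i a := by ext a; simp
        rw [this]; exact Finset.measurable_sum t (fun i _ => hm i)
      have h2 := aux_map_add_gauss hms (hm k) hIk ih (h k)
      rw [add_comm (∑ i ∈ t, Y i) (Y k)] at h2
      rwa [add_comm (w k) (∑ i ∈ t, w i)]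

lemma aux_gauss_even (v : ℝ≥0) (x : ℝ) : gaussianPDFReal 0 v (-x) = gaussianPDFReal 0 v x := by
  simp [gaussianPDFReal, neg_sq]

lemma aux_int_Iio_eq (v : ℝ≥0) (c : ℝ) :
    ∫ x in Iio (-c), gaussianPDFReal 0 v x = ∫ x in Ioi c, gaussianPDFReal 0 v x := by
  calc ∫ x in Iio (-c), gaussianPDFReal 0 v x
      = ∫ x in Iic (-c), gaussianPDFReal 0 v x := integral_Iic_eq_integral_Iio.symm
    _ = ∫ x in Ioi c, gaussianPDFReal 0 v (-x) := (integral_comp_neg_Ioi c _).symm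
    _ = ∫ x in Ioi c, gaussianPDFReal 0 v x := by simp_rw [aux_gauss_even]

lemma aux_int_Ioi_shift (v : ℝ≥0) (c : ℝ) :
    ∫ x in Ioi c, gaussianPDFReal c v x = ∫ x in Ioi 0, gaussianPDFReal 0 v x := by
  have h1 : ∀ x : ℝ, (Ioi c).indicator (gaussianPDFReal c v) x
      = (Ioi (0:ℝ)).indicator (gaussianPDFReal 0 v) (x - c) := by
    intro x
    have hmem : x ∈ Ioi c ↔ x - c ∈ Ioi (0:ℝ) := by simp [sub_pos]
    by_cases hx : x ∈ Ioi c
    · rw [indicator_of_mem hx, indicator_of_mem (hmem.1 hx), gaussianPDFReal_sub]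
      simp
    · rw [indicator_of_notMem hx, indicator_of_notMem (fun h => hx (hmem.2 h))]
  rw [← integral_indicator measurableSet_Ioi, ← integral_indicator measurableSet_Ioi]
  simp_rw [h1]
  exact integral_sub_right_eq_self ((Ioi (0:ℝ)).indicator (gaussianPDFReal 0 v)) c

lemma aux_int_Ioi_zero (v : ℝ≥0) (hv : v ≠ 0) :
    ∫ x in Ioi (0:ℝ), gaussianPDFReal 0 v x = 1/2 := by
  have htot : (∫ x in Iio (0:ℝ), gaussianPDFReal 0 v x)
      + ∫ x in Ici (0:ℝ), gaussianPDFReal 0 v x = 1 := by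
    rw [intervalIntegral.integral_Iio_add_Ici ((integrable_gaussianPDFReal 0 v).restrict)
      ((integrable_gaussianPDFReal 0 v).restrict)]
    exact integral_gaussianPDFReal_eq_one 0 hv
  rw [MeasureTheory.integral_Ici_eq_integral_Ioi] at htot
  have hsym := aux_int_Iio_eq v 0
  rw [neg_zero] at hsym
  linarith

lemma aux_gauss_tail_one_side (v : ℝ≥0) (hv : v ≠ 0) {c : ℝ} (hc : 0 ≤ c) :
    ∫ x in Ioi c, gaussianPDFReal 0 v x ≤ Real.exp (-(c^2/(2*v))) * (1/2) := by
  have hv' : (0:ℝ) < v := lt_of_le_of_ne v.coe_nonneg (by exact_mod_cast (Ne.symm hv))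
  have hpt : ∀ x ∈ Ioi c, gaussianPDFReal 0 v x
      ≤ Real.exp (-(c^2/(2*v))) * gaussianPDFReal c v x := by
    intro x hx
    have hxc : c ≤ x := le_of_lt hx
    have h2v : (0:ℝ) < 2*v := by positivity
    have key : rexp (-x^2/(2*(v:ℝ))) ≤ rexp (-(c^2/(2*(v:ℝ)))) * rexp (-(x-c)^2/(2*v)) := by
      rw [← Real.exp_add, Real.exp_le_exp]
      have e1 : -(c^2/(2*(v:ℝ))) + -(x-c)^2/(2*(v:ℝ)) = (-c^2 + -(x-c)^2)/(2*v) := by ring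
      rw [e1, div_le_div_iff₀ h2v h2v]
      nlinarith [mul_nonneg hc (sub_nonneg.2 hxc)]
    simp only [gaussianPDFReal, sub_zero]
    calc (√(2 * π * v))⁻¹ * rexp (-x^2/(2*(v:ℝ)))
        ≤ (√(2 * π * v))⁻¹ * (rexp (-(c^2/(2*(v:ℝ)))) * rexp (-(x-c)^2/(2*v))) :=
          mul_le_mul_of_nonneg_left key (by positivity)
      _ = rexp (-(c^2/(2*(v:ℝ)))) * ((√(2 * π * v))⁻¹ * rexp (-(x-c)^2/(2*v))) := by ring
  calc ∫ x in Ioi c, gaussianPDFReal 0 v x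
      ≤ ∫ x in Ioi c, Real.exp (-(c^2/(2*v))) * gaussianPDFReal c v x :=
        setIntegral_mono_on ((integrable_gaussianPDFReal 0 v).restrict)
          (((integrable_gaussianPDFReal c v).const_mul _).restrict) measurableSet_Ioi hpt
    _ = Real.exp (-(c^2/(2*v))) * ∫ x in Ioi c, gaussianPDFReal c v x := by
        rw [integral_const_mul]
    _ = Real.exp (-(c^2/(2*v))) * (1/2) := by rw [aux_int_Ioi_shift, aux_int_Ioi_zero v hv]

/-- Two-sided Gaussian tail bound: for `Y ~ N(0, v)` and `c ≥ 0`,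
`P(|Y| > c) ≤ exp (-c² / (2v))`. -/
lemma aux_gauss_tail_meas {Y : Ω → ℝ} (hY : Measurable Y) {v : ℝ≥0} (hv : v ≠ 0)
    (hmap : Measure.map Y ℙ = gaussianReal 0 v) {c : ℝ} (hc : 0 ≤ c) :
    ℙ {ω | c < |Y ω|} ≤ ENNReal.ofReal (Real.exp (-(c^2/(2*v)))) := by
  have hSeq : {x : ℝ | c < |x|} = Iio (-c) ∪ Ioi c := by
    ext x
    simp only [mem_setOf_eq, mem_union, mem_Iio, mem_Ioi, lt_abs, lt_neg]
    tauto
  have hsetm : MeasurableSet {x : ℝ | c < |x|} := by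
    rw [hSeq]; exact measurableSet_Iio.union measurableSet_Ioi
  have h1 : {ω | c < |Y ω|} = Y ⁻¹' {x | c < |x|} := rfl
  rw [h1, ← Measure.map_apply hY hsetm, hmap, gaussianReal_apply_eq_integral 0 hv _]
  apply ENNReal.ofReal_le_ofReal
  have hdisj : Disjoint (Iio (-c)) (Ioi c) :=
    (Iio_disjoint_Ici (by linarith)).mono_right Ioi_subset_Ici_self
  rw [hSeq, setIntegral_union hdisj measurableSet_Ioi
    ((integrable_gaussianPDFReal 0 v).restrict) ((integrable_gaussianPDFReal 0 v).restrict),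
    aux_int_Iio_eq]
  have := aux_gauss_tail_one_side v hv hc
  linarith

end Aux

open scoped NNReal

/-- Gaussian tail bound for ‖Xᵀε‖_∞/(nσ). -/
theorem sup_norm_gaussian_tail {n p : ℕ} (hn : 0 < n)
    (X : Matrix (Fin n) (Fin p) ℝ) (hX : ∀ j, ∑ i, (X i j)^2 = (n : ℝ))
    (σ : ℝ) (hσ : 0 < σ)
    {Ω : Type} [MeasureSpace Ω] [IsProbabilityMeasure (ℙ : Measure Ω)]
    (ε : Ω → Fin n → ℝ)
    (hmeas : ∀ i, Measurable (fun ω => ε ω i))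
    (hgauss : ∀ i, Measure.map (fun ω => ε ω i) ℙ = gaussianReal 0 ⟨σ^2, sq_nonneg σ⟩)
    (hindep : iIndepFun (fun i ω => ε ω i) ℙ)
    (L : ℝ) (hL : 0 < L) :
    ℙ {ω | Real.sqrt ((2*Real.log p + 2*L)/n) < linf (Xᵀ.mulVec (ε ω)) / (n*σ)}
      ≤ ENNReal.ofReal (Real.exp (-L)) := by
  have hnn : (0:ℝ) < n := Nat.cast_pos.2 hn
  have hnσ : (0:ℝ) < n*σ := by positivity
  set t : ℝ := Real.sqrt ((2*Real.log p + 2*L)/n) with ht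
  rcases Nat.eq_zero_or_pos p with hp | hp
  · subst hp
    have hset : {ω | t < linf (Xᵀ.mulVec (ε ω)) / ((n:ℝ)*σ)} = ∅ := by
      ext ω
      simp only [Set.mem_setOf_eq, Set.mem_empty_iff_false, iff_false, not_lt]
      have : linf (Xᵀ.mulVec (ε ω)) = 0 := by
        simp [linf, ciSup_of_empty]
      rw [this, zero_div]
      exact Real.sqrt_nonneg _
    rw [hset]
    simp
  -- main case
  have hp1 : (1:ℝ) ≤ p := Nat.one_le_cast.2 hp
  have hp0 : (0:ℝ) < p := by linarith
  have hlogp : 0 ≤ Real.log p := Real.log_nonneg hp1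
  have harg : 0 ≤ (2*Real.log p + 2*L)/n := by positivity
  set c : ℝ := t * ((n:ℝ)*σ) with hc
  have hc0 : 0 ≤ c := mul_nonneg (Real.sqrt_nonneg _) hnσ.le
  set Z : Fin p → Ω → ℝ := fun j ω => ∑ i, X i j * ε ω i with hZ
  have hZmeas : ∀ j, Measurable (Z j) :=
    fun j => Finset.measurable_sum _ (fun i _ => (hmeas i).const_mul _)
  set vT : ℝ≥0 := ⟨(n:ℝ)*σ^2, by positivity⟩ with hvT
  have hvTc : (vT : ℝ) = (n:ℝ)*σ^2 := rfl
  have hvT0 : vT ≠ 0 := by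
    intro h
    have := congrArg (NNReal.toReal) h
    rw [hvTc] at this
    simp at this
    rcases this with h1 | h1
    · exact hn.ne' h1
    · exact hσ.ne' h1
  have hmapZ : ∀ j, Measure.map (Z j) ℙ = gaussianReal 0 vT := by
    intro j
    have hindY : iIndepFun (fun i ω => X i j * ε ω i) ℙ :=
      hindep.comp (fun i x => X i j * x) (fun i => measurable_const_mul _)
    have hYg : ∀ i, Measure.map (fun ω => X i j * ε ω i) ℙ
        = gaussianReal 0 (⟨(X i j)^2, sq_nonneg _⟩ * ⟨σ^2, sq_nonneg σ⟩) := by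
      intro i
      have := (gaussianReal_const_mul ⟨(hmeas i).aemeasurable, hgauss i⟩ (X i j)).map_eq
      rwa [mul_zero] at this
    have hsum := aux_map_sum_gauss (fun i ω => X i j * ε ω i)
      (fun i => (hmeas i).const_mul _) hindY _ hYg Finset.univ
    have hfun : (∑ i : Fin n, fun ω => X i j * ε ω i) = Z j := by
      ext ω; simp [hZ]
    rw [hfun] at hsum
    rw [hsum]
    congr 1
    apply NNReal.coe_injective
    push_cast
    change ∑ i : Fin n, (X i j)^2 * σ^2 = (vT:ℝ)
    rw [← Finset.sum_mul, hX j, hvTc]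
  have htail : ∀ j, ℙ {ω | c < |Z j ω|} ≤ ENNReal.ofReal (Real.exp (-(Real.log p + L))) := by
    intro j
    have hcsq : c^2/(2*(vT:ℝ)) = Real.log p + L := by
      rw [hc, mul_pow, Real.sq_sqrt harg, hvTc]
      field_simp
    have := aux_gauss_tail_meas (hZmeas j) hvT0 (hmapZ j) hc0
    rwa [hcsq] at this
  have hsub : {ω | t < linf (Xᵀ.mulVec (ε ω)) / ((n:ℝ)*σ)} ⊆ ⋃ j, {ω | c < |Z j ω|} := by
    intro ω hω
    simp only [Set.mem_setOf_eq] at hω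
    rw [lt_div_iff₀ hnσ] at hω
    have hbdd : BddAbove (Set.range fun j => |Xᵀ.mulVec (ε ω) j|) :=
      Set.Finite.bddAbove (Set.finite_range _)
    haveI : Nonempty (Fin p) := ⟨⟨0, hp⟩⟩
    have hex : ∃ j, c < |Xᵀ.mulVec (ε ω) j| := by
      rw [hc] at *
      exact (lt_ciSup_iff hbdd).1 hω
    obtain ⟨j, hj⟩ := hex
    refine Set.mem_iUnion.2 ⟨j, ?_⟩
    have hcoord : Xᵀ.mulVec (ε ω) j = Z j ω := by
      simp [Matrix.mulVec, dotProduct, Matrix.transpose_apply, hZ]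
    rw [Set.mem_setOf_eq, ← hcoord]
    exact hj
  calc ℙ {ω | t < linf (Xᵀ.mulVec (ε ω)) / ((n:ℝ)*σ)}
      ≤ ℙ (⋃ j, {ω | c < |Z j ω|}) := measure_mono hsub
    _ ≤ ∑' j, ℙ {ω | c < |Z j ω|} := measure_iUnion_le _
    _ = ∑ j, ℙ {ω | c < |Z j ω|} := tsum_fintype _
    _ ≤ ∑ _j : Fin p, ENNReal.ofReal (Real.exp (-(Real.log p + L))) :=
        Finset.sum_le_sum (fun j _ => htail j)
    _ = (p : ℝ≥0∞) * ENNReal.ofReal (Real.exp (-(Real.log p + L))) := by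
        rw [Finset.sum_const, Finset.card_univ, Fintype.card_fin, nsmul_eq_mul]
    _ = ENNReal.ofReal (Real.exp (-L)) := by
        rw [← ENNReal.ofReal_natCast p, ← ENNReal.ofReal_mul (by positivity)]
        congr 1
        rw [neg_add, Real.exp_add, Real.exp_neg, Real.exp_log hp0]
        field_simp
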